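/- arXiv:1303.2305 — 5 statements merged into one kernel-verified Lean document; each statement's English description precedes it below -/
import Mathlib

section
/- For every real number q > 1 with 1/p + 1/q = 1, and for every real t, the sum over all integers j of |sinc(t - j)|^q is strictly less than p, where sinc(t) = sin(πt)/(πt) (and sinc(0) = 1). -/
open Real

noncomputable def sinc (t : ℝ) : ℝ :=
  if t = 0 then 1 else Real.sin (Real.pi * t) / (Real.pi * t)

/- ## Auxiliary lemmas -/

lemma exp_neg_le_quad (z : ℝ) (hz : 0 ≤ z) : Real.exp (-z) ≤ 1 / (1 + z + z ^ 2 / 2) := by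
  have h := Real.quadratic_le_exp_of_nonneg hz
  have hpos : (0:ℝ) < 1 + z + z ^ 2 / 2 := by positivity
  rw [Real.exp_neg, inv_eq_one_div]
  exact one_div_le_one_div_of_le hpos h

lemma sub_one_div_le_log (x : ℝ) (hx : 0 < x) : 1 - 1/x ≤ Real.log x := by
  have h := Real.log_le_sub_one_of_pos (show (0:ℝ) < x⁻¹ by positivity)
  rw [Real.log_inv] at h
  have : x⁻¹ = 1/x := (one_div x).symm
  linarith [h, this ▸ h]

lemma log_pi_div_two_ge : (0.3633:ℝ) ≤ Real.log (π/2) := by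
  have h := sub_one_div_le_log (π/2) (by positivity)
  have hπ := Real.pi_gt_d6
  have h2 : 1/(π/2) ≤ 0.6367 := by
    rw [div_le_iff₀ (by positivity)]
    nlinarith
  linarith

lemma log_pi_ge : (1.1347:ℝ) ≤ Real.log π := by
  have h := sub_one_div_le_log (π / Real.exp 1) (by positivity)
  rw [Real.log_div (ne_of_gt Real.pi_pos) (ne_of_gt (Real.exp_pos 1)), Real.log_exp] at h
  have hπ := Real.pi_gt_d6
  have he : Real.exp 1 < 2.7182818286 := Real.exp_one_lt_d9
  have hepos := Real.exp_pos 1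
  have h2 : 1/(π / Real.exp 1) = Real.exp 1 / π := by
    rw [one_div_div]
  rw [h2] at h
  have h3 : Real.exp 1 / π ≤ 0.8653 := by
    rw [div_le_iff₀ Real.pi_pos]
    nlinarith
  linarith

lemma two_div_pi_rpow_le (x : ℝ) (hx : 0 ≤ x) :
    (2/π) ^ x ≤ 1 / (1 + 0.3633*x + (0.3633*x) ^ 2 / 2) := by
  have h0 : (0:ℝ) < 2/π := by positivity
  have h1 : (2/π:ℝ) ^ x = Real.exp (Real.log (2/π) * x) := Real.rpow_def_of_pos h0 x
  have h2 : Real.log (2/π) = - Real.log (π/2) := by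
    rw [← Real.log_inv, inv_div]
  have h3 : Real.log (2/π) * x ≤ -(0.3633*x) := by
    rw [h2]
    have := log_pi_div_two_ge
    nlinarith
  calc (2/π:ℝ) ^ x = Real.exp (Real.log (2/π) * x) := h1
    _ ≤ Real.exp (-(0.3633*x)) := Real.exp_le_exp.2 h3
    _ ≤ 1 / (1 + 0.3633*x + (0.3633*x) ^ 2 / 2) := exp_neg_le_quad _ (by positivity)

lemma inv_pi_rpow_le (x : ℝ) (hx : 0 ≤ x) :
    (1/π) ^ x ≤ 1 / (1 + 1.1347*x + (1.1347*x) ^ 2 / 2) := by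
  have h0 : (0:ℝ) < 1/π := by positivity
  have h1 : (1/π:ℝ) ^ x = Real.exp (Real.log (1/π) * x) := Real.rpow_def_of_pos h0 x
  have h2 : Real.log (1/π) = - Real.log π := by
    rw [one_div, Real.log_inv]
  have h3 : Real.log (1/π) * x ≤ -(1.1347*x) := by
    rw [h2]
    have := log_pi_ge
    nlinarith
  calc (1/π:ℝ) ^ x = Real.exp (Real.log (1/π) * x) := h1
    _ ≤ Real.exp (-(1.1347*x)) := Real.exp_le_exp.2 h3
    _ ≤ 1 / (1 + 1.1347*x + (1.1347*x) ^ 2 / 2) := exp_neg_le_quad _ (by positivity)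

set_option maxHeartbeats 1000000 in
lemma numeric1 (q : ℝ) (hq : 1 < q) (hq2 : q ≤ 2) :
    (q-1)*(2/π)^q + 2*q*(1/π)^q < 1 := by
  have hπ := Real.pi_gt_d6
  have hy0 : 0 < q - 1 := by linarith
  have hy1 : q - 1 ≤ 1 := by linarith
  have hD1 : (0:ℝ) < 1 + 0.3633*(q-1) + (0.3633*(q-1)) ^ 2 / 2 := by positivity
  have hD2 : (0:ℝ) < 1 + 1.1347*(q-1) + (1.1347*(q-1)) ^ 2 / 2 := by positivity
  have h2π : (0:ℝ) < 2/π := by positivity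
  have h1π : (0:ℝ) < 1/π := by positivity
  have hsplit1 : (2/π:ℝ)^q = (2/π) * (2/π)^(q-1) := by
    rw [show q = 1 + (q-1) by ring, Real.rpow_add h2π, Real.rpow_one]; ring_nf
  have hsplit2 : (1/π:ℝ)^q = (1/π) * (1/π)^(q-1) := by
    rw [show q = 1 + (q-1) by ring, Real.rpow_add h1π, Real.rpow_one]; ring_nf
  have hb1 := two_div_pi_rpow_le (q-1) hy0.le
  have hb2 := inv_pi_rpow_le (q-1) hy0.le
  have hc1 : (2/π:ℝ) ≤ 0.63663 := by rw [div_le_iff₀ Real.pi_pos]; nlinarith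
  have hc2 : (1/π:ℝ) ≤ 0.3184 := by rw [div_le_iff₀ Real.pi_pos]; nlinarith
  have ha1 : (2/π:ℝ)^q ≤ 0.63663 * (1 / (1 + 0.3633*(q-1) + (0.3633*(q-1)) ^ 2 / 2)) := by
    rw [hsplit1]
    exact mul_le_mul hc1 hb1 (Real.rpow_nonneg h2π.le _) (by norm_num)
  have ha2 : (1/π:ℝ)^q ≤ 0.3184 * (1 / (1 + 1.1347*(q-1) + (1.1347*(q-1)) ^ 2 / 2)) := by
    rw [hsplit2]
    exact mul_le_mul hc2 hb2 (Real.rpow_nonneg h1π.le _) (by norm_num)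
  have key : (q-1) * (0.63663 * (1 / (1 + 0.3633*(q-1) + (0.3633*(q-1)) ^ 2 / 2)))
      + 2*q * (0.3184 * (1 / (1 + 1.1347*(q-1) + (1.1347*(q-1)) ^ 2 / 2))) < 1 := by
    rw [show (q-1) * (0.63663 * (1 / (1 + 0.3633*(q-1) + (0.3633*(q-1)) ^ 2 / 2)))
      + 2*q * (0.3184 * (1 / (1 + 1.1347*(q-1) + (1.1347*(q-1)) ^ 2 / 2)))
      = ((q-1) * 0.63663 * (1 + 1.1347*(q-1) + (1.1347*(q-1)) ^ 2 / 2)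
        + 2*q * 0.3184 * (1 + 0.3633*(q-1) + (0.3633*(q-1)) ^ 2 / 2))
        / ((1 + 0.3633*(q-1) + (0.3633*(q-1)) ^ 2 / 2) * (1 + 1.1347*(q-1) + (1.1347*(q-1)) ^ 2 / 2))
      by field_simp, div_lt_one (by positivity)]
    nlinarith [sq_nonneg (q-1), sq_nonneg (2-q), mul_pos hy0 hy0, sq_nonneg ((q-1)*(2-q))]
  have m1 := mul_le_mul_of_nonneg_left ha1 hy0.le
  have m2 := mul_le_mul_of_nonneg_left ha2 (by linarith : (0:ℝ) ≤ 2*q)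
  calc (q-1)*(2/π)^q + 2*q*(1/π)^q
      ≤ (q-1) * (0.63663 * (1 / (1 + 0.3633*(q-1) + (0.3633*(q-1)) ^ 2 / 2)))
      + 2*q * (0.3184 * (1 / (1 + 1.1347*(q-1) + (1.1347*(q-1)) ^ 2 / 2))) := by linarith
    _ < 1 := key

set_option maxHeartbeats 1000000 in
lemma numeric2 (q : ℝ) (hq2 : 2 ≤ q) :
    ((q-1)*2^q + 2*q) * (1/π)^(q-2) < π^2 + 1.15*(q-1) := by
  have hπ := Real.pi_gt_d6
  have hz0 : 0 ≤ q - 2 := by linarith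
  have hD1 : (0:ℝ) < 1 + 0.3633*(q-2) + (0.3633*(q-2)) ^ 2 / 2 := by positivity
  have hD2 : (0:ℝ) < 1 + 1.1347*(q-2) + (1.1347*(q-2)) ^ 2 / 2 := by positivity
  have h1π : (0:ℝ) < 1/π := by positivity
  have hsplit : (2:ℝ)^q = 4 * 2^(q-2) := by
    have h4 : (2:ℝ)^(2:ℝ) = 4 := by
      rw [show (2:ℝ) = ((2:ℕ):ℝ) from by norm_num, Real.rpow_natCast]; norm_num
    rw [show q = 2 + (q-2) by ring, Real.rpow_add (by norm_num : (0:ℝ) < 2)]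
    rw [show (2:ℝ) + (q-2) - 2 = q - 2 by ring, h4]
  have hmul : (2:ℝ)^(q-2) * (1/π)^(q-2) = (2/π)^(q-2) := by
    rw [← Real.mul_rpow (by norm_num) h1π.le]
    ring_nf
  have hb1 := two_div_pi_rpow_le (q-2) hz0
  have hb2 := inv_pi_rpow_le (q-2) hz0
  have h2z : (0:ℝ) ≤ (2:ℝ)^(q-2) := Real.rpow_nonneg (by norm_num) _
  have h1z : (0:ℝ) ≤ (1/π:ℝ)^(q-2) := Real.rpow_nonneg h1π.le _
  have expand : ((q-1)*2^q + 2*q) * (1/π)^(q-2)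
      = 4*(q-1) * (2/π)^(q-2) + 2*q * (1/π)^(q-2) := by
    rw [hsplit, ← hmul]; ring
  have hq1 : (0:ℝ) ≤ q - 1 := by linarith
  have m1 : 4*(q-1) * (2/π)^(q-2) ≤ 4*(q-1) * (1 / (1 + 0.3633*(q-2) + (0.3633*(q-2)) ^ 2 / 2)) :=
    mul_le_mul_of_nonneg_left hb1 (by linarith)
  have m2 : 2*q * (1/π)^(q-2) ≤ 2*q * (1 / (1 + 1.1347*(q-2) + (1.1347*(q-2)) ^ 2 / 2)) :=
    mul_le_mul_of_nonneg_left hb2 (by linarith)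
  have hπ2 : (9.8696:ℝ) < π^2 := by nlinarith
  have key : 4*(q-1) * (1 / (1 + 0.3633*(q-2) + (0.3633*(q-2)) ^ 2 / 2))
      + 2*q * (1 / (1 + 1.1347*(q-2) + (1.1347*(q-2)) ^ 2 / 2)) < 9.8696 + 1.15*(q-1) := by
    rw [show 4*(q-1) * (1 / (1 + 0.3633*(q-2) + (0.3633*(q-2)) ^ 2 / 2))
      + 2*q * (1 / (1 + 1.1347*(q-2) + (1.1347*(q-2)) ^ 2 / 2))
      = (4*(q-1) * (1 + 1.1347*(q-2) + (1.1347*(q-2)) ^ 2 / 2)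
        + 2*q * (1 + 0.3633*(q-2) + (0.3633*(q-2)) ^ 2 / 2))
        / ((1 + 0.3633*(q-2) + (0.3633*(q-2)) ^ 2 / 2) * (1 + 1.1347*(q-2) + (1.1347*(q-2)) ^ 2 / 2))
      by field_simp, div_lt_iff₀ (by positivity)]
    nlinarith [sq_nonneg (q-2), mul_nonneg hz0 hz0, sq_nonneg ((q-2)*(q-2)),
      mul_nonneg (mul_nonneg hz0 hz0) hz0, sq_nonneg ((q-2)^2*(q-2))]
  calc ((q-1)*2^q + 2*q) * (1/π)^(q-2)
      = 4*(q-1) * (2/π)^(q-2) + 2*q * (1/π)^(q-2) := expand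
    _ ≤ 4*(q-1) * (1 / (1 + 0.3633*(q-2) + (0.3633*(q-2)) ^ 2 / 2))
      + 2*q * (1 / (1 + 1.1347*(q-2) + (1.1347*(q-2)) ^ 2 / 2)) := by linarith
    _ < 9.8696 + 1.15*(q-1) := key
    _ ≤ π^2 + 1.15*(q-1) := by nlinarith

lemma mvt_step (q a : ℝ) (hq : 1 < q) (ha : 1 ≤ a) :
    (q-1) * (a+1) ^ (-q) ≤ a ^ (1-q) - (a+1) ^ (1-q) := by
  have hab : a < a + 1 := by linarith
  have hcont : ContinuousOn (fun x : ℝ => x ^ (1-q)) (Set.Icc a (a+1)) := by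
    apply ContinuousOn.rpow_const continuousOn_id
    intro x hx
    left
    have := hx.1
    intro h; simp only [id] at h; rw [h] at this; linarith
  have hderiv : ∀ x ∈ Set.Ioo a (a+1), HasDerivAt (fun x : ℝ => x ^ (1-q)) ((1-q) * x ^ (-q)) x := by
    intro x hx
    have hx0 : x ≠ 0 := by have := hx.1; intro h; rw [h] at this; linarith
    have h := Real.hasDerivAt_rpow_const (x := x) (p := 1-q) (Or.inl hx0)
    convert h using 1
    rw [show (1:ℝ) - q - 1 = -q by ring]
  obtain ⟨c, hc, heq⟩ := exists_hasDerivAt_eq_slope (fun x : ℝ => x ^ (1-q))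
    (fun x => (1-q) * x ^ (-q)) hab hcont hderiv
  have hc0 : 0 < c := lt_of_le_of_lt (by linarith : (0:ℝ) ≤ a) hc.1
  have hcq : (a+1) ^ (-q) ≤ c ^ (-q) := by
    rw [Real.rpow_neg hc0.le, Real.rpow_neg (by linarith : (0:ℝ) ≤ a+1)]
    have h1 : (0:ℝ) < c ^ q := Real.rpow_pos_of_pos hc0 q
    have h2 : c ^ q ≤ (a+1) ^ q := Real.rpow_le_rpow hc0.le hc.2.le (by linarith)
    exact inv_anti₀ h1 h2
  have heq' : (1-q) * c ^ (-q) = (a+1) ^ (1-q) - a ^ (1-q) := by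
    rw [heq]; field_simp; ring
  nlinarith [mul_le_mul_of_nonneg_left hcq (by linarith : (0:ℝ) ≤ q - 1)]

lemma zeta_sum_le (q : ℝ) (hq : 1 < q) (N : ℕ) :
    ∑ n ∈ Finset.range N, ((n:ℝ)+1) ^ (-q) ≤ 1 + 1/(q-1) := by
  have hq1 : (0:ℝ) < q - 1 := by linarith
  have key : ∀ M : ℕ, ∑ n ∈ Finset.range (M+1), ((n:ℝ)+1) ^ (-q)
      ≤ 1 + (1 - ((M:ℝ)+1) ^ (1-q))/(q-1) := by
    intro M
    induction M with
    | zero => simp [Real.one_rpow]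
    | succ M ih =>
      rw [Finset.sum_range_succ]
      have hstep := mvt_step q ((M:ℝ)+1) hq (by simp)
      have h2 : (((M:ℝ)+1)+1) ^ (-q)
          ≤ (((M:ℝ)+1) ^ (1-q) - (((M:ℝ)+1)+1) ^ (1-q))/(q-1) := by
        rw [le_div_iff₀ hq1]; nlinarith
      push_cast
      push_cast at ih
      have e1 : ((M:ℝ) + 1 + 1) = ((M:ℝ)+1)+1 := by ring
      rw [e1]
      calc ∑ n ∈ Finset.range (M+1), ((n:ℝ)+1) ^ (-q) + (((M:ℝ)+1)+1) ^ (-q)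
          ≤ 1 + (1 - ((M:ℝ)+1) ^ (1-q))/(q-1)
            + (((M:ℝ)+1) ^ (1-q) - (((M:ℝ)+1)+1) ^ (1-q))/(q-1) := by
            apply add_le_add ih h2
        _ = 1 + (1 - (((M:ℝ)+1)+1) ^ (1-q))/(q-1) := by ring
  cases N with
  | zero => simp; positivity
  | succ M =>
    refine (key M).trans ?_
    have : (0:ℝ) ≤ ((M:ℝ)+1) ^ (1-q) := Real.rpow_nonneg (by positivity) _
    have h3 : (1 - ((M:ℝ)+1) ^ (1-q))/(q-1) ≤ 1/(q-1) := by
      gcongr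
      linarith
    linarith

lemma zeta_summable (q : ℝ) (hq : 1 < q) : Summable (fun n : ℕ => ((n:ℝ)+1) ^ (-q)) := by
  have h : Summable (fun n : ℕ => ((n:ℝ)) ^ (-q)) := Real.summable_nat_rpow.2 (by linarith)
  have h2 := (summable_nat_add_iff 1).2 h
  apply h2.congr
  intro n
  push_cast
  norm_num

lemma zeta_tsum_le (q : ℝ) (hq : 1 < q) :
    ∑' n : ℕ, ((n:ℝ)+1) ^ (-q) ≤ 1 + 1/(q-1) := by
  apply Summable.tsum_le_of_sum_le (zeta_summable q hq)
  intro u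
  obtain ⟨N, hN⟩ := u.exists_nat_subset_range
  calc ∑ n ∈ u, ((n:ℝ)+1) ^ (-q)
      ≤ ∑ n ∈ Finset.range N, ((n:ℝ)+1) ^ (-q) :=
        Finset.sum_le_sum_of_subset_of_nonneg hN (fun i _ _ => by positivity)
    _ ≤ 1 + 1/(q-1) := zeta_sum_le q hq N

lemma sinc_quad (r : ℝ) (h0 : 0 < r) (h2 : r ≤ 1/2) :
    Real.sin (π*r) / (π*r) ≤ 1 - 1.15*r^2 := by
  have hπ1 := Real.pi_gt_d6
  have hπ2 := Real.pi_lt_d6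
  have hy0 : 0 < π*r/2 := by positivity
  have hy1 : π*r/2 ≤ 1 := by nlinarith
  have hyπ : π*r/2 ≤ π/2 := by nlinarith
  have hcosb := Real.cos_bound (show |π*r/2| ≤ 1 by rw [abs_of_pos hy0]; exact hy1)
  rw [abs_of_pos hy0] at hcosb
  have hcos : Real.cos (π*r/2) ≤ 1 - (π*r/2)^2/2 + (π*r/2)^4*(5/96) := by
    have := (abs_le.1 hcosb).2
    linarith
  have hcy : 0 ≤ Real.cos (π*r/2) := Real.cos_nonneg_of_mem_Icc ⟨by linarith, hyπ⟩
  have hsin : Real.sin (π*r) ≤ (π*r) * Real.cos (π*r/2) := by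
    have h2y : Real.sin (π*r) = 2 * Real.sin (π*r/2) * Real.cos (π*r/2) := by
      have := Real.sin_two_mul (π*r/2)
      rw [show 2*(π*r/2) = π*r by ring] at this
      exact this
    rw [h2y]
    have hsy : Real.sin (π*r/2) ≤ π*r/2 := Real.sin_le hy0.le
    nlinarith
  have hπr : 0 < π*r := by positivity
  rw [div_le_iff₀ hπr]
  have hfin : Real.cos (π*r/2) ≤ 1 - 1.15*r^2 := by
    have hr2 : r^2 ≤ 1/4 := by nlinarith
    have hπ2a : (9.8696:ℝ) < π^2 := by nlinarith
    have hπ2b : π^2 < 9.869607 := by nlinarith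
    have hπ4 : π^4 < 97.4092 := by nlinarith [Real.pi_pos]
    have hA : π^4*r^4 ≤ 97.4092*r^4 := mul_le_mul_of_nonneg_right hπ4.le (by positivity)
    have hB : r^4 ≤ r^2/4 := by nlinarith [sq_nonneg r]
    have hC : 9.8696*r^2 ≤ π^2*r^2 := mul_le_mul_of_nonneg_right hπ2a.le (by positivity)
    have hr4 : (0:ℝ) ≤ r^4 := by positivity
    nlinarith
  nlinarith

lemma abs_sinc (s : ℝ) (h0 : 0 < s) (h1 : s < 1) (j : ℤ) :
    |_root_.sinc (s - (j:ℝ))| = (Real.sin (π*s)/π) / |s - (j:ℝ)| := by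
  have hne : s - (j:ℝ) ≠ 0 := by
    intro h
    have hj : (j:ℝ) = s := by linarith
    rcases le_or_gt j 0 with hc | hc
    · have : (j:ℝ) ≤ 0 := by exact_mod_cast hc
      linarith
    · have : (1:ℤ) ≤ j := hc
      have : (1:ℝ) ≤ (j:ℝ) := by exact_mod_cast this
      linarith
  rw [_root_.sinc, if_neg hne]
  have hsin : Real.sin (π * (s - (j:ℝ))) = (-1)^j * Real.sin (π*s) := by
    have h2 : π*(s - (j:ℝ)) = -((j:ℝ)*π - π*s) := by push_cast; ring
    rw [h2, Real.sin_neg, Real.sin_int_mul_pi_sub]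
    ring
  rw [abs_div, hsin, abs_mul]
  have h3 : |((-1:ℝ))^j| = 1 := by
    rcases Int.even_or_odd j with he | ho
    · rw [he.neg_one_zpow]; norm_num
    · rw [ho.neg_one_zpow]; norm_num
  have h4 : |Real.sin (π*s)| = Real.sin (π*s) := by
    apply abs_of_nonneg
    apply Real.sin_nonneg_of_nonneg_of_le_pi (by positivity)
    nlinarith [Real.pi_pos]
  have h5 : |π*(s-(j:ℝ))| = π * |s - (j:ℝ)| := by
    rw [abs_mul, abs_of_pos Real.pi_pos]
  rw [h3, h4, h5, one_mul, div_div]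

set_option maxHeartbeats 1000000 in
lemma key_ineq (q r : ℝ) (hq : 1 < q) (h0 : 0 < r) (h2 : r ≤ 1/2) :
    (Real.sin (π*r)/π/r)^q + (Real.sin (π*r)/π/(1-r))^q
      + 2*((min r (1/π))^q*(1+1/(q-1))) < 1 + 1/(q-1) := by
  have hq0 : (0:ℝ) < q := by linarith
  have hq1 : (0:ℝ) < q - 1 := by linarith
  have hπ := Real.pi_pos
  set A := Real.sin (π*r)/π with hA
  set B := min r (1/π) with hB
  have hsinpos : 0 < Real.sin (π*r) :=
    Real.sin_pos_of_pos_of_lt_pi (by positivity) (by nlinarith)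
  have hA0 : 0 < A := by positivity
  have hsinle : Real.sin (π*r) ≤ π*r := Real.sin_le (by positivity)
  have hAr : A ≤ r := by rw [hA, div_le_iff₀ hπ]; nlinarith
  have hA1π : A ≤ 1/π := by
    rw [hA]
    gcongr
    exact Real.sin_le_one _
  have hB0 : 0 < B := lt_min h0 (by positivity)
  have hBr : B ≤ r := min_le_left _ _
  have hBπ : B ≤ 1/π := min_le_right _ _
  have hAB : A ≤ B := le_min hAr hA1π
  have h1r0 : (0:ℝ) < 1 - r := by linarith
  have hsinc1 : A/r ≤ 1 := by rw [div_le_one h0]; exact hAr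
  have hcross : A/(1-r) ≤ 2*B := by
    have e1 : A/(1-r) ≤ A/(1/2) := by
      apply div_le_div_of_nonneg_left hA0.le (by norm_num) (by linarith)
    have e2 : A/(1/2) = 2*A := by ring
    linarith
  have hm2 : (A/(1-r))^q ≤ (2*B)^q :=
    Real.rpow_le_rpow (by positivity) hcross hq0.le
  rcases le_or_gt q 2 with hq2 | hq2
  · -- case q ≤ 2
    have hm1 : (A/r)^q ≤ 1 := Real.rpow_le_one (by positivity) hsinc1 hq0.le
    have h2B : (2*B)^q ≤ (2/π)^q := by
      apply Real.rpow_le_rpow (by positivity) ?_ hq0.le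
      rw [show (2:ℝ)/π = 2*(1/π) by ring]
      linarith
    have hBq : B^q ≤ (1/π)^q := Real.rpow_le_rpow hB0.le hBπ hq0.le
    have hN := numeric1 q hq hq2
    have hd0 : (0:ℝ) < 1 + 1/(q-1) := by positivity
    have htail : 2*(B^q*(1+1/(q-1))) ≤ 2*((1/π)^q*(1+1/(q-1))) := by
      apply mul_le_mul_of_nonneg_left ?_ (by norm_num)
      exact mul_le_mul_of_nonneg_right hBq hd0.le
    have hfin : (2/π)^q + 2*((1/π)^q*(1+1/(q-1))) < 1/(q-1) := by
      rw [lt_div_iff₀ hq1]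
      have hident : ((2/π)^q + 2*((1/π)^q*(1+1/(q-1))))*(q-1)
          = (q-1)*(2/π)^q + 2*q*(1/π)^q := by field_simp; ring
      rw [hident]; exact hN
    linarith
  · -- case 2 < q
    have hq2' : (2:ℝ) ≤ q := hq2.le
    have hApos : 0 < A/r := by positivity
    have hsq : (A/r)^q ≤ A/r := by
      calc (A/r)^q ≤ (A/r)^(1:ℝ) :=
            Real.rpow_le_rpow_of_exponent_ge hApos hsinc1 (by linarith)
        _ = A/r := Real.rpow_one _
    have hquad : A/r ≤ 1 - 1.15*r^2 := by
      rw [hA, div_div]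
      exact sinc_quad r h0 h2
    have hB2r : B^2 ≤ r^2 := by nlinarith
    have hm1 : (A/r)^q ≤ 1 - 1.15*B^2 := by nlinarith
    have hBsplit : B^q = B^2 * B^(q-2) := by
      rw [← Real.rpow_natCast B 2, ← Real.rpow_add hB0]
      norm_num
    have hBq2 : B^(q-2) ≤ (1/π)^(q-2) :=
      Real.rpow_le_rpow hB0.le hBπ (by linarith)
    have hW0 : (0:ℝ) ≤ (1/π)^(q-2) := Real.rpow_nonneg (by positivity) _
    have h2q0 : (0:ℝ) ≤ (2:ℝ)^q := Real.rpow_nonneg (by norm_num) _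
    have hBqle : B^q ≤ B^2 * (1/π)^(q-2) := by
      rw [hBsplit]
      exact mul_le_mul_of_nonneg_left hBq2 (by positivity)
    have hm2' : (2*B)^q = 2^q * B^q := Real.mul_rpow (by norm_num) hB0.le
    have hm2'' : (2*B)^q ≤ 2^q * (B^2 * (1/π)^(q-2)) := by
      rw [hm2']
      exact mul_le_mul_of_nonneg_left hBqle h2q0
    have hd0 : (0:ℝ) < 1 + 1/(q-1) := by positivity
    have htail : 2*(B^q*(1+1/(q-1))) ≤ 2*(B^2 * (1/π)^(q-2)*(1+1/(q-1))) := by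
      apply mul_le_mul_of_nonneg_left ?_ (by norm_num)
      exact mul_le_mul_of_nonneg_right hBqle hd0.le
    have hN := numeric2 q hq2'
    have hB2pos : (0:ℝ) < B^2 := by positivity
    have hπB : B^2*π^2 ≤ 1 := by
      have hb : B*π ≤ 1 := by
        rw [← le_div_iff₀ hπ]
        exact hBπ
      nlinarith [mul_pos hB0 hπ]
    have hmulN : B^2*(((q-1)*2^q + 2*q) * (1/π)^(q-2)) < B^2*(π^2 + 1.15*(q-1)) :=
      mul_lt_mul_of_pos_left hN hB2pos
    have e1 : (1+1/(q-1))*(q-1) = q := by field_simp; ring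
    have e2 : (1/(q-1))*(q-1) = 1 := by field_simp
    have hgoal : 1 - 1.15*B^2 + 2^q * (B^2 * (1/π)^(q-2))
        + 2*(B^2 * (1/π)^(q-2)*(1+1/(q-1))) < 1 + 1/(q-1) := by
      have hmul : (1 - 1.15*B^2 + 2^q * (B^2 * (1/π)^(q-2))
          + 2*(B^2 * (1/π)^(q-2)*(1+1/(q-1))))*(q-1) < (1 + 1/(q-1))*(q-1) := by
        have expand : (1 - 1.15*B^2 + 2^q * (B^2 * (1/π)^(q-2))
            + 2*(B^2 * (1/π)^(q-2)*(1+1/(q-1))))*(q-1)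
            = (q-1) - 1.15*B^2*(q-1) + B^2*(((q-1)*2^q + 2*q) * (1/π)^(q-2)) := by
          field_simp
          ring
        have expand2 : (1 + 1/(q-1))*(q-1) = (q-1) + 1 := by field_simp
        rw [expand, expand2]
        nlinarith
      exact lt_of_mul_lt_mul_right hmul hq1.le
    linarith

theorem stmt0 (p q : ℝ) (hq : 1 < q) (hpq : 1 / p + 1 / q = 1) (t : ℝ) :
    ∑' j : ℤ, |_root_.sinc (t - (j : ℝ))| ^ q < p := by
  have hq0 : (0:ℝ) < q := by linarith
  have hq1 : (0:ℝ) < q - 1 := by linarith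
  have hqne : q ≠ 0 := ne_of_gt hq0
  have hpne : p ≠ 0 := by
    intro h
    rw [h, div_zero, zero_add] at hpq
    have : q = 1 := by
      rw [div_eq_one_iff_eq hqne] at hpq
      linarith
    linarith
  have hp : p = 1 + 1/(q-1) := by
    have h1 : 1/p = (q-1)/q := by
      field_simp
      field_simp at hpq
      linarith
    have hppos : 0 < 1/p := by rw [h1]; positivity
    have hppos' : 0 < p := by
      rcases lt_trichotomy p 0 with h | h | h
      · exfalso; have : 1/p < 0 := by exact one_div_neg.2 h
        linarith
      · exact absurd h hpne
      · exact h
    field_simp at h1 ⊢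
    nlinarith [h1]
  by_cases hsummable : Summable (fun j : ℤ => |_root_.sinc (t - (j:ℝ))| ^ q)
  case neg =>
    rw [tsum_eq_zero_of_not_summable hsummable, hp]
    positivity
  case pos =>
  by_cases hfrac : Int.fract t = 0
  · -- t is an integer
    have ht : t = (⌊t⌋:ℝ) := by
      have h := hfrac
      rw [Int.fract] at h
      linarith
    have hterm : ∀ j : ℤ, |_root_.sinc (t - (j:ℝ))| ^ q = if j = ⌊t⌋ then (1:ℝ) else 0 := by
      intro j
      by_cases h : j = ⌊t⌋
      · have h0 : t - (j:ℝ) = 0 := by rw [h]; linarith [ht]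
        rw [h0, if_pos h]
        simp [_root_.sinc, Real.one_rpow]
      · have hcast : t - (j:ℝ) = ((⌊t⌋ - j : ℤ):ℝ) := by push_cast; linarith [ht]
        have hmne : (⌊t⌋ - j : ℤ) ≠ 0 := by omega
        have hval : _root_.sinc (((⌊t⌋ - j : ℤ):ℝ)) = 0 := by
          rw [_root_.sinc, if_neg (by exact_mod_cast hmne)]
          rw [show π * ((⌊t⌋ - j : ℤ):ℝ) = ((⌊t⌋ - j : ℤ):ℝ) * π by ring,
            Real.sin_int_mul_pi]
          exact zero_div _
        rw [hcast, hval, abs_zero, Real.zero_rpow hqne, if_neg h]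
    calc ∑' j : ℤ, |_root_.sinc (t - (j:ℝ))| ^ q
        = ∑' j : ℤ, (if j = ⌊t⌋ then (1:ℝ) else 0) := tsum_congr hterm
      _ = 1 := tsum_ite_eq ⌊t⌋ 1
      _ < p := by
          rw [hp]
          have : 0 < 1/(q-1) := by positivity
          linarith
  · -- t is not an integer
    set s := Int.fract t with hsdef
    have hs0 : 0 < s := lt_of_le_of_ne (Int.fract_nonneg t) (Ne.symm hfrac)
    have hs1 : s < 1 := Int.fract_lt_one t
    have hrw : ∀ j : ℤ, t - (j:ℝ) = s - ((j - ⌊t⌋ : ℤ):ℝ) := by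
      intro j
      rw [hsdef, Int.fract]
      push_cast
      ring
    set G : ℤ → ℝ := fun j => |_root_.sinc (s - (j:ℝ))| ^ q with hGdef
    have hcomp : (fun j : ℤ => |_root_.sinc (t - (j:ℝ))| ^ q)
        = fun j : ℤ => G ((Equiv.subRight ⌊t⌋) j) := by
      funext j
      rw [hGdef]
      simp only [Equiv.subRight_apply]
      rw [hrw j]
    have hre : ∑' j : ℤ, |_root_.sinc (t - (j:ℝ))| ^ q = ∑' j : ℤ, G j := by
      rw [hcomp]
      exact (Equiv.subRight ⌊t⌋).tsum_eq G
    have hGsum : Summable G := by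
      rw [hcomp] at hsummable
      exact (Equiv.subRight ⌊t⌋).summable_iff.1 hsummable
    rw [hre]
    -- setup
    set A := Real.sin (π*s)/π with hAdef
    set r := min s (1-s) with hrdef
    set B := min r (1/π) with hBdef
    have hπ := Real.pi_pos
    have hr0 : 0 < r := lt_min hs0 (by linarith)
    have hr2 : r ≤ 1/2 := by
      rcases le_total s (1-s) with h | h
      · rw [hrdef, min_eq_left h]; linarith
      · rw [hrdef, min_eq_right h]; linarith
    have hB0 : 0 < B := lt_min hr0 (by positivity)
    have hsinpos : 0 < Real.sin (π*s) :=
      Real.sin_pos_of_pos_of_lt_pi (by positivity) (by nlinarith)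
    have hA0 : 0 < A := by positivity
    have hAr : A ≤ r := by
      have h1 : A ≤ s := by
        rw [hAdef, div_le_iff₀ hπ]
        nlinarith [Real.sin_le (show (0:ℝ) ≤ π*s by positivity)]
      have h2 : A ≤ 1 - s := by
        rw [hAdef, div_le_iff₀ hπ]
        have := Real.sin_le (show (0:ℝ) ≤ π*(1-s) by nlinarith)
        rw [show π*(1-s) = π - π*s by ring, Real.sin_pi_sub] at this
        nlinarith
      exact le_min h1 h2
    have hA1π : A ≤ 1/π := by
      rw [hAdef]
      gcongr
      exact Real.sin_le_one _
    have hAB : A ≤ B := le_min hAr hA1π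
    have hGj : ∀ j : ℤ, G j = (A / |s - (j:ℝ)|) ^ q := by
      intro j
      rw [hGdef]
      simp only
      rw [abs_sinc s hs0 hs1 j, hAdef]
    -- extract terms j = 0 and j = 1
    have e1 : ∑' j : ℤ, G j = G 0 + ∑' j : ℤ, (if j = 0 then 0 else G j) :=
      Summable.tsum_eq_add_tsum_ite hGsum 0
    have hf1 : Summable (fun j : ℤ => if j = 0 then 0 else G j) := by
      have h := hasSum_ite_sub_hasSum hGsum.hasSum 0
      exact h.summable
    have e2 : ∑' j : ℤ, (if j = 0 then 0 else G j)
        = (if (1:ℤ) = 0 then 0 else G 1)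
          + ∑' j : ℤ, (if j = 1 then 0 else if j = 0 then 0 else G j) :=
      Summable.tsum_eq_add_tsum_ite hf1 1
    have hf2 : Summable (fun j : ℤ => if j = 1 then 0 else if j = 0 then 0 else G j) := by
      have h := hasSum_ite_sub_hasSum hf1.hasSum 1
      exact h.summable
    -- majorant
    set Fn : ℕ → ℝ := fun n => (B/((n:ℝ)+1))^q with hFndef
    have hFneq : Fn = fun n : ℕ => B^q * ((n:ℝ)+1) ^ (-q) := by
      funext n
      rw [hFndef]
      simp only
      rw [Real.div_rpow hB0.le (by positivity), Real.rpow_neg (by positivity), div_eq_mul_inv]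
    have hFnsum : Summable Fn := by
      rw [hFneq]
      exact (zeta_summable q hq).mul_left _
    set Z := ∑' n : ℕ, Fn n with hZdef
    have hZ_le : Z ≤ B^q * (1 + 1/(q-1)) := by
      rw [hZdef, hFneq, tsum_mul_left]
      exact mul_le_mul_of_nonneg_left (zeta_tsum_le q hq) (Real.rpow_nonneg hB0.le q)
    set Fp : ℕ → ℝ := fun n => if n ≤ 1 then 0 else (B/((n:ℝ)-1))^q with hFpdef
    have hFp : HasSum Fp Z := by
      have hshift : (fun n : ℕ => Fp (n+2)) = Fn := by
        funext n
        rw [hFpdef, hFndef]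
        simp only
        rw [if_neg (by omega)]
        push_cast
        rw [show ((n:ℝ)+2-1) = (n:ℝ)+1 by ring]
      have h1 : HasSum (fun n : ℕ => Fp (n+2)) Z := by
        rw [hshift]; exact hFnsum.hasSum
      have h2 := (hasSum_nat_add_iff (f := Fp) 2).1 h1
      have h3 : ∑ i ∈ Finset.range 2, Fp i = 0 := by
        rw [hFpdef, Finset.sum_range_succ, Finset.sum_range_one]
        norm_num
      rw [h3, add_zero] at h2
      exact h2
    have hMaj : HasSum (fun j : ℤ => (Int.rec Fp Fn j : ℝ)) (Z + Z) :=
      HasSum.int_rec hFp hFnsum.hasSum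
    have hpt : ∀ j : ℤ, (if j = 1 then 0 else if j = 0 then 0 else G j)
        ≤ (Int.rec Fp Fn j : ℝ) := by
      intro j
      cases j with
      | ofNat n =>
        show _ ≤ Fp n
        match n with
        | 0 => simp [hFpdef]
        | 1 => simp [hFpdef]
        | (m+2) =>
          have hof : (Int.ofNat (m+2) : ℤ) = ((m:ℤ) + 2) := by
            simp
          rw [hof, if_neg (by omega : ¬ ((m:ℤ)+2 = 1)), if_neg (by omega : ¬ ((m:ℤ)+2 = 0))]
          rw [hFpdef]
          simp only
          rw [if_neg (by omega)]
          rw [hGj]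
          apply Real.rpow_le_rpow (by positivity) ?_ hq0.le
          have hcast : (((m:ℤ) + 2 : ℤ):ℝ) = (m:ℝ)+2 := by push_cast; ring
          rw [hcast]
          have habs : |s - ((m:ℝ)+2)| = (m:ℝ)+2 - s := by
            rw [abs_of_neg (by linarith)]; ring
          rw [habs]
          have hcast2 : (((m+2:ℕ)):ℝ) - 1 = (m:ℝ)+1 := by push_cast; ring
          rw [hcast2]
          apply div_le_div₀ hB0.le hAB (by positivity) (by linarith)
      | negSucc n =>
        show _ ≤ Fn n
        have hns := Int.negSucc_lt_zero n
        rw [if_neg (by intro hh; rw [hh] at hns; norm_num at hns),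
          if_neg (by intro hh; rw [hh] at hns; norm_num at hns)]
        rw [hFndef]
        simp only
        rw [hGj]
        apply Real.rpow_le_rpow (by positivity) ?_ hq0.le
        have hcast : ((Int.negSucc n : ℤ):ℝ) = -((n:ℝ)+1) := by
          rw [Int.cast_negSucc]; push_cast; ring
        rw [hcast]
        have habs : |s - (-((n:ℝ)+1))| = s + (n:ℝ)+1 := by
          rw [abs_of_pos (by linarith)]; ring
        rw [habs]
        apply div_le_div₀ hB0.le hAB (by positivity) (by linarith)
    have hS2 : ∑' j : ℤ, (if j = 1 then 0 else if j = 0 then 0 else G j) ≤ Z + Z := by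
      calc ∑' j : ℤ, (if j = 1 then 0 else if j = 0 then 0 else G j)
          ≤ ∑' j : ℤ, (Int.rec Fp Fn j : ℝ) := Summable.tsum_le_tsum hpt hf2 hMaj.summable
        _ = Z + Z := hMaj.tsum_eq
    -- values of G 0 and G 1
    have hG0 : G 0 = (A/s)^q := by
      rw [hGj]
      norm_num
      rw [abs_of_pos hs0]
    have hG1 : G 1 = (A/(1-s))^q := by
      rw [hGj]
      norm_num
      rw [show |s - 1| = 1 - s by rw [abs_of_neg (by linarith)]; ring]
    -- regroup mains
    have hsr : Real.sin (π*s) = Real.sin (π*r) := by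
      rcases le_total s (1-s) with h | h
      · rw [hrdef, min_eq_left h]
      · rw [hrdef, min_eq_right h, show π*(1-s) = π - π*s by ring, Real.sin_pi_sub]
    have hmains : (A/s)^q + (A/(1-s))^q = (A/r)^q + (A/(1-r))^q := by
      rcases le_total s (1-s) with h | h
      · rw [hrdef, min_eq_left h]
      · rw [hrdef, min_eq_right h, show 1 - (1-s) = s by ring, add_comm]
    -- apply key inequality
    have hA_r : A = Real.sin (π*r)/π := by rw [hAdef, hsr]
    have hB_r : B = min r (1/π) := hBdef
    have hkey := key_ineq q r hq hr0 hr2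
    rw [← hA_r] at hkey
    -- assemble
    have htail2 : Z + Z ≤ 2*(B^q*(1+1/(q-1))) := by linarith
    calc ∑' j : ℤ, G j
        = G 0 + ((if (1:ℤ) = 0 then 0 else G 1)
          + ∑' j : ℤ, (if j = 1 then 0 else if j = 0 then 0 else G j)) := by
          rw [e1, e2]
      _ = G 0 + G 1 + ∑' j : ℤ, (if j = 1 then 0 else if j = 0 then 0 else G j) := by
          rw [if_neg (show ¬ (1:ℤ) = 0 by norm_num)]
          ring
      _ ≤ (A/s)^q + (A/(1-s))^q + (Z + Z) := by
          rw [hG0, hG1]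
          linarith [hS2]
      _ = (A/r)^q + (A/(1-r))^q + (Z + Z) := by rw [hmains]
      _ ≤ (A/r)^q + (A/(1-r))^q + 2*((min r (1/π))^q*(1+1/(q-1))) := by
          rw [← hB_r]
          linarith [htail2]
      _ < 1 + 1/(q-1) := hkey
      _ = p := hp.symm
end

section
/- For every natural number k ≥ 1 and every real t ∈ (0,1) and every n ≥ 1, the tail sum Σ_{j ∉ J_n} 1/|t - j|^{k+1} is at most (1/n + 2/k) · n^{-k}, where J_n = {j ∈ ℤ : -n+1 ≤ j ≤ n}. -/
open Set Finset

-- telescoping inequality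
lemma tele_ineq (k : ℕ) (hk : 1 ≤ k) (a : ℝ) (ha : 1 ≤ a) :
    1 / (a + 1) ^ (k + 1) ≤ 1 / (k * a ^ k) - 1 / (k * (a + 1) ^ k) := by
  have ha0 : (0:ℝ) < a := by linarith
  have hb0 : (0:ℝ) < a + 1 := by linarith
  have hak : (0:ℝ) < a ^ k := pow_pos ha0 k
  have hbk : (0:ℝ) < (a+1) ^ k := pow_pos hb0 k
  have hk0 : (0:ℝ) < k := by exact_mod_cast hk
  have bern : (1 : ℝ) + k * (1/a) ≤ (1 + 1/a) ^ k :=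
    one_add_mul_le_pow (le_trans (by norm_num) (by positivity : (0:ℝ) ≤ 1/a)) k
  have key : a ^ k + k * a ^ k / a ≤ (a + 1) ^ k := by
    have h1 : (a * (1 + 1/a)) ^ k = (a + 1) ^ k := by
      rw [mul_add, mul_one_div, div_self ha0.ne', mul_one]
    calc a ^ k + k * a ^ k / a = a ^ k * (1 + k * (1/a)) := by field_simp
      _ ≤ a ^ k * (1 + 1/a) ^ k := by
          exact mul_le_mul_of_nonneg_left bern hak.le
      _ = (a + 1) ^ k := by rw [← mul_pow, h1]
  have heq : 1 / ((k:ℝ) * a ^ k) - 1 / (k * (a + 1) ^ k)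
      = ((a+1)^k - a^k) / (k * (a^k * (a+1)^k)) := by
    field_simp
  rw [heq]
  rw [div_le_div_iff₀ (by positivity) (by positivity), pow_succ]
  have h2 : (k:ℝ) * a ^ k ≤ ((a+1)^k - a^k) * (a+1) := by
    have h3 : (k:ℝ) * a ^ k / a ≤ (a+1)^k - a^k := by linarith
    have h4 : (k:ℝ) * a ^ k / a * (a + 1) ≤ ((a+1)^k - a^k) * (a+1) :=
      mul_le_mul_of_nonneg_right h3 hb0.le
    calc (k:ℝ) * a ^ k = (k * a^k / a) * a := by field_simp
      _ ≤ (k * a^k / a) * (a+1) := by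
          apply mul_le_mul_of_nonneg_left (by linarith) (by positivity)
      _ ≤ _ := h4
  calc 1 * ((k:ℝ) * (a^k * (a+1)^k)) = ((k:ℝ) * a^k) * (a+1)^k := by ring
    _ ≤ (((a+1)^k - a^k) * (a+1)) * (a+1)^k := mul_le_mul_of_nonneg_right h2 hbk.le
    _ = ((a+1)^k - a^k) * ((a+1)^k * (a+1)) := by ring

lemma tail_le (k n : ℕ) (hk : 1 ≤ k) (hn : 1 ≤ n) :
    ∑' i : ℕ, 1 / ((n:ℝ) + 1 + i) ^ (k + 1) ≤ 1 / (k * (n:ℝ) ^ k) := by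
  apply Real.tsum_le_of_sum_range_le (fun i => by positivity)
  intro N
  have hcast : ∀ i : ℕ, ((n:ℝ) + i) + 1 = (n:ℝ) + 1 + i := by intro i; ring
  calc ∑ i ∈ Finset.range N, 1 / ((n:ℝ) + 1 + i) ^ (k + 1)
      ≤ ∑ i ∈ Finset.range N,
        (1 / (k * ((n:ℝ) + i) ^ k) - 1 / (k * ((n:ℝ) + (i+1:ℕ)) ^ k)) := by
        apply Finset.sum_le_sum
        intro i _
        have h := tele_ineq k hk ((n:ℝ) + i) (by
          have : (1:ℝ) ≤ n := by exact_mod_cast hn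
          have : (0:ℝ) ≤ i := Nat.cast_nonneg i
          linarith)
        rw [hcast i] at h
        convert h using 4
        · rfl
        push_cast; ring
    _ = 1 / (k * ((n:ℝ) + (0:ℕ)) ^ k) - 1 / (k * ((n:ℝ) + (N:ℕ)) ^ k) :=
        Finset.sum_range_sub' (f := fun i : ℕ => 1 / ((k:ℝ) * ((n:ℝ) + i) ^ k)) N
    _ ≤ 1 / (k * (n:ℝ) ^ k) := by
        have : (0:ℝ) ≤ 1 / (k * ((n:ℝ) + (N:ℕ)) ^ k) := by positivity
        simp only [Nat.cast_zero, add_zero]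
        linarith

lemma pair_le (k : ℕ) (m t : ℝ) (hm : 1 ≤ m) (ht : t ∈ Set.Ioo (0:ℝ) 1) :
    1 / (m + t) ^ (k+1) + 1 / (m + 1 - t) ^ (k+1)
      ≤ 1 / m ^ (k+1) + 1 / (m + 1) ^ (k+1) := by
  obtain ⟨ht0, ht1⟩ := ht
  have hm0 : (0:ℝ) < m := by linarith
  have hm1 : (0:ℝ) < m + 1 := by linarith
  have hc := convexOn_zpow (𝕜 := ℝ) (-((k:ℤ)+1))
  have h1 := hc.2 (Set.mem_Ioi.2 hm0) (Set.mem_Ioi.2 hm1)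
    (by linarith : (0:ℝ) ≤ 1 - t) ht0.le (by ring)
  have h2 := hc.2 (Set.mem_Ioi.2 hm0) (Set.mem_Ioi.2 hm1)
    ht0.le (by linarith : (0:ℝ) ≤ 1 - t) (by ring)
  simp only [smul_eq_mul] at h1 h2
  have e1 : (1 - t) * m + t * (m + 1) = m + t := by ring
  have e2 : t * m + (1 - t) * (m + 1) = m + 1 - t := by ring
  rw [e1] at h1
  rw [e2] at h2
  have hz : ∀ x : ℝ, 0 < x → x ^ (-((k:ℤ)+1)) = 1 / x ^ (k+1) := by
    intro x hx
    rw [show -((k:ℤ)+1) = -((k+1 : ℕ) : ℤ) by push_cast; ring, zpow_neg, zpow_natCast, one_div]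
  rw [hz _ (by linarith), hz _ hm0, hz _ hm1] at h1
  rw [hz _ (by linarith), hz _ hm0, hz _ hm1] at h2
  linarith
def tailEquiv (n : ℕ) : ℕ × Bool ≃ {j : ℤ // j < -(n : ℤ) + 1 ∨ (n : ℤ) < j} where
  toFun p := if p.2 then ⟨(n:ℤ) + 1 + p.1, Or.inr (by omega)⟩
    else ⟨-(n:ℤ) - p.1, Or.inl (by omega)⟩
  invFun j := if (n:ℤ) < j.1 then ((j.1 - (n:ℤ) - 1).toNat, true)
    else ((-(n:ℤ) - j.1).toNat, false)
  left_inv := by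
    rintro ⟨i, b⟩
    cases b
    · simp only [Bool.false_eq_true, if_false]
      rw [if_neg (by omega)]
      simp
    · simp only [if_true]
      rw [if_pos (by omega)]
      simp
      omega
  right_inv := by
    rintro ⟨j, hj⟩
    by_cases h : (n:ℤ) < j
    · simp [h, Subtype.ext_iff]
      omega
    · simp [h, Subtype.ext_iff]
      omega
theorem stmt4 (k n : ℕ) (hk : 1 ≤ k) (hn : 1 ≤ n) (t : ℝ) (ht : t ∈ Set.Ioo (0 : ℝ) 1) :
    ∑' j : {j : ℤ // j < -(n : ℤ) + 1 ∨ (n : ℤ) < j}, 1 / |t - ((j : ℤ) : ℝ)| ^ (k + 1)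
      ≤ (1 / n + 2 / k) * ((n : ℝ) ^ k)⁻¹ := by
  obtain ⟨ht0, ht1⟩ := ht
  have hn1 : (1:ℝ) ≤ n := by exact_mod_cast hn
  have hk0 : (0:ℝ) < k := by exact_mod_cast hk
  have hn0 : (0:ℝ) < n := by linarith
  set S := {j : ℤ // j < -(n : ℤ) + 1 ∨ (n : ℤ) < j} with hS
  set F : S → ℝ := fun j => 1 / |t - ((j : ℤ) : ℝ)| ^ (k + 1) with hF
  set A : ℕ → ℝ := fun i => 1 / ((n:ℝ) + i + t) ^ (k+1) with hA
  set B : ℕ → ℝ := fun i => 1 / ((n:ℝ) + 1 + i - t) ^ (k+1) with hB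
  have hposA : ∀ i : ℕ, (0:ℝ) < (n:ℝ) + i := fun i => by
    have : (0:ℝ) ≤ i := Nat.cast_nonneg i; linarith
  have hvalA : ∀ i : ℕ, F (tailEquiv n (i, false)) = A i := by
    intro i
    have h1 : ((tailEquiv n (i, false) : ℤ) : ℝ) = -(n:ℝ) - i := by
      simp [tailEquiv]
    rw [hF, hA]
    dsimp only
    rw [h1, show t - (-(n:ℝ) - i) = (n:ℝ) + i + t by ring,
      abs_of_pos (by have := hposA i; linarith)]
  have hvalB : ∀ i : ℕ, F (tailEquiv n (i, true)) = B i := by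
    intro i
    have h1 : ((tailEquiv n (i, true) : ℤ) : ℝ) = (n:ℝ) + 1 + i := by
      simp [tailEquiv]
    rw [hF, hB]
    dsimp only
    rw [h1, show t - ((n:ℝ) + 1 + i) = -((n:ℝ) + 1 + i - t) by ring, abs_neg,
      abs_of_pos (by have := hposA i; linarith)]
  have hbase : Summable (fun i : ℕ => 1 / ((n:ℝ) + i) ^ (k+1)) := by
    have h0 : Summable (fun i : ℕ => 1 / (i:ℝ) ^ (k+1)) :=
      Real.summable_one_div_nat_pow.2 (by omega)
    exact ((summable_nat_add_iff n).2 h0).congr fun i => by push_cast; ring_nf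
  have hbase' : Summable (fun i : ℕ => 1 / ((n:ℝ) + 1 + i) ^ (k+1)) := by
    refine Summable.of_nonneg_of_le (fun i => by positivity) (fun i => ?_) hbase
    apply one_div_le_one_div_of_le (by positivity)
    apply pow_le_pow_left₀ (hposA i).le (by linarith)
  have hsumA : Summable A := by
    refine Summable.of_nonneg_of_le (fun i => by rw [hA]; positivity) (fun i => ?_) hbase
    rw [hA]
    apply one_div_le_one_div_of_le (by positivity)
    apply pow_le_pow_left₀ (hposA i).le (by linarith)
  have hsumB : Summable B := by
    refine Summable.of_nonneg_of_le (fun i => by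
      rw [hB]; dsimp only
      have hx : (0:ℝ) < (n:ℝ) + 1 + i - t := by have := hposA i; linarith
      exact one_div_nonneg.2 (pow_nonneg hx.le _)) (fun i => ?_) hbase
    rw [hB]
    apply one_div_le_one_div_of_le (by positivity)
    apply pow_le_pow_left₀ (hposA i).le (by linarith)
  have hFe : Summable (fun p : ℕ × Bool => F (tailEquiv n p)) := by
    refine Summable.of_nonneg_of_le (f := fun p : ℕ × Bool => 1 / ((n:ℝ) + p.1) ^ (k+1)) (fun p => by rw [hF]; dsimp only; positivity) (fun p => ?_) ?_
    · show F (tailEquiv n p) ≤ (fun p : ℕ × Bool => 1 / ((n:ℝ) + p.1) ^ (k+1)) p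
      obtain ⟨i, b⟩ := p
      cases b
      · rw [hvalA i, hA]
        dsimp only
        apply one_div_le_one_div_of_le (by positivity)
        apply pow_le_pow_left₀ (hposA i).le (by linarith)
      · rw [hvalB i, hB]
        dsimp only
        apply one_div_le_one_div_of_le (by positivity)
        apply pow_le_pow_left₀ (hposA i).le (by linarith)
    · refine (summable_prod_of_nonneg (fun p => by positivity)).2 ⟨fun a => .of_finite, ?_⟩
      refine (hbase.mul_left 2).congr fun a => ?_
      rw [tsum_fintype]
      simp
  have hsumF : Summable F := (tailEquiv n).summable_iff.1 hFe
  have pairbound : ∀ i : ℕ, A i + B i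
      ≤ 1 / ((n:ℝ) + i) ^ (k+1) + 1 / ((n:ℝ) + 1 + i) ^ (k+1) := by
    intro i
    have h := pair_le k ((n:ℝ) + i) t (by have : (0:ℝ) ≤ i := Nat.cast_nonneg i; linarith)
      ⟨ht0, ht1⟩
    rw [hA, hB]
    dsimp only
    rw [show (n:ℝ) + 1 + i - t = ((n:ℝ) + i) + 1 - t by ring,
      show (n:ℝ) + 1 + i = ((n:ℝ) + i) + 1 by ring]
    exact h
  have key : ∑' j : S, F j ≤ (1 / (n:ℝ) ^ (k+1) + 1 / (k * (n:ℝ) ^ k)) + 1 / (k * (n:ℝ) ^ k) := by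
    calc ∑' j : S, F j = ∑' p : ℕ × Bool, F (tailEquiv n p) := (Equiv.tsum_eq _ _).symm
      _ = ∑' i : ℕ, ∑' b : Bool, F (tailEquiv n (i, b)) := hFe.tsum_prod
      _ = ∑' i : ℕ, (A i + B i) := by
          refine tsum_congr fun i => ?_
          rw [tsum_bool, hvalA i, hvalB i]
      _ ≤ ∑' i : ℕ, (1 / ((n:ℝ) + i) ^ (k+1) + 1 / ((n:ℝ) + 1 + i) ^ (k+1)) :=
          Summable.tsum_le_tsum pairbound (hsumA.add hsumB) (hbase.add hbase')
      _ = (∑' i : ℕ, 1 / ((n:ℝ) + i) ^ (k+1)) + ∑' i : ℕ, 1 / ((n:ℝ) + 1 + i) ^ (k+1) :=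
          Summable.tsum_add hbase hbase'
      _ ≤ (1 / (n:ℝ) ^ (k+1) + 1 / (k * (n:ℝ) ^ k)) + 1 / (k * (n:ℝ) ^ k) := by
          have e1 : (∑' i : ℕ, 1 / ((n:ℝ) + i) ^ (k+1))
              = 1 / ((n:ℝ) + (0:ℕ)) ^ (k+1) + ∑' i : ℕ, 1 / ((n:ℝ) + ((i:ℕ)+1:ℕ)) ^ (k+1) := by
            apply tsum_eq_zero_add'
            refine hbase'.congr fun i => ?_
            push_cast; ring_nf
          rw [e1]
          have e2 : (∑' i : ℕ, 1 / ((n:ℝ) + ((i:ℕ)+1:ℕ)) ^ (k+1))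
              = ∑' i : ℕ, 1 / ((n:ℝ) + 1 + i) ^ (k+1) := by
            refine tsum_congr fun i => ?_
            push_cast; ring_nf
          rw [e2]
          have ht2 := tail_le k n hk hn
          have : ((n:ℝ) + (0:ℕ)) = (n:ℝ) := by push_cast; ring
          rw [this]
          linarith
  calc ∑' j : S, F j ≤ _ := key
    _ = (1 / n + 2 / k) * ((n : ℝ) ^ k)⁻¹ := by
        field_simp
        ring
end

section
/- For all natural numbers k ≥ 1, k! ≤ (11√(2π)/10) · (k/e)^k · √k. -/
theorem stmt5 (k : ℕ) (hk : 1 ≤ k) :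
    (Nat.factorial k : ℝ) ≤
      (11 * Real.sqrt (2 * Real.pi) / 10) * ((k : ℝ) / Real.exp 1) ^ k * Real.sqrt k := by
  obtain ⟨n, rfl⟩ := Nat.exists_eq_add_of_le hk
  have hanti := Stirling.stirlingSeq'_antitone (Nat.zero_le n)
  simp only [Function.comp] at hanti
  rw [Nat.add_comm 1 n]
  rw [show Nat.succ 0 = 1 from rfl, Stirling.stirlingSeq_one] at hanti
  -- hanti : stirlingSeq (n+1) ≤ exp 1 / √2
  have hk' : (0:ℝ) < (n+1 : ℕ) := by positivity
  have hs : Real.sqrt (2 * (n+1:ℕ)) = Real.sqrt 2 * Real.sqrt (n+1:ℕ) := by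
    rw [Real.sqrt_mul (by norm_num)]
  have hfac : (Nat.factorial (n+1) : ℝ) =
      Stirling.stirlingSeq (n+1) * (Real.sqrt (2*(n+1:ℕ)) * ((n+1:ℕ)/Real.exp 1)^(n+1)) := by
    rw [Stirling.stirlingSeq]
    field_simp
  have hpos : (0:ℝ) < Real.sqrt (2*(n+1:ℕ)) * ((n+1:ℕ)/Real.exp 1)^(n+1) := by
    positivity
  have h1 : (Nat.factorial (n+1) : ℝ) ≤
      (Real.exp 1 / Real.sqrt 2) * (Real.sqrt (2*(n+1:ℕ)) * ((n+1:ℕ)/Real.exp 1)^(n+1)) := by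
    rw [hfac]
    exact mul_le_mul_of_nonneg_right hanti hpos.le
  have h2 : (Real.exp 1 / Real.sqrt 2) * (Real.sqrt (2*(n+1:ℕ)) * ((n+1:ℕ)/Real.exp 1)^(n+1))
      = Real.exp 1 * ((n+1:ℕ)/Real.exp 1)^(n+1) * Real.sqrt (n+1:ℕ) := by
    rw [hs]
    have h2pos : (0:ℝ) < Real.sqrt 2 := by positivity
    field_simp
  have he : Real.exp 1 ≤ 11 * Real.sqrt (2 * Real.pi) / 10 := by
    have h9 := Real.exp_one_lt_d9
    have hpi := Real.pi_gt_d6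
    have hsq : (2.42 : ℝ) * Real.pi ≤ (11 * Real.sqrt (2 * Real.pi) / 10)^2 := by
      rw [div_pow, mul_pow, Real.sq_sqrt (by positivity)]
      ring_nf
      nlinarith [Real.pi_pos]
    nlinarith [Real.exp_pos 1, Real.sqrt_nonneg (2 * Real.pi), Real.pi_pos]
  calc (Nat.factorial (n+1) : ℝ)
      ≤ Real.exp 1 * ((n+1:ℕ)/Real.exp 1)^(n+1) * Real.sqrt (n+1:ℕ) := by
        rw [← h2]; exact h1
    _ ≤ (11 * Real.sqrt (2 * Real.pi) / 10) * ((n+1:ℕ)/Real.exp 1)^(n+1) * Real.sqrt (n+1:ℕ) := by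
        gcongr
end

section
/- For every k ∈ ℕ, k ≥ 1, and 0 < b, the infimum of (1/√(2π)) ‖φ^{(k)}‖_{L¹([-b,b])} over all φ ∈ C^k compactly supported in [-b,b] with φ̂(0) = 1 satisfies: it is bounded below by 2^{k-1} k! / b^k (lower bound direction). -/
open MeasureTheory

noncomputable def fourierTr (f : ℝ → ℂ) (ξ : ℝ) : ℂ :=
  (1 / Real.sqrt (2 * Real.pi)) * ∫ t : ℝ, f t * Complex.exp (-(Complex.I * t * ξ))

open Polynomial

lemma cheb_aux : ∀ n : ℕ, (Chebyshev.T ℝ n).natDegree ≤ n ∧ (Chebyshev.T ℝ n).coeff n = 2 ^ (n - 1) := by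
  intro n
  induction n using Nat.twoStepInduction with
  | zero => simp [Chebyshev.T_zero]
  | one => simp [Chebyshev.T_one]
  | more n ih ih1 =>
    have h2 : Chebyshev.T ℝ (((n+2:ℕ)):ℤ) = 2*X*Chebyshev.T ℝ ((n:ℤ)+1) - Chebyshev.T ℝ n := by
      push_cast
      exact Chebyshev.T_add_two ℝ n
    rw [h2]
    have hdn : (Chebyshev.T ℝ n).natDegree ≤ n := ih.1
    have hdn1 : (Chebyshev.T ℝ ((n:ℤ)+1)).natDegree ≤ n+1 := by
      have := ih1.1; push_cast at this ⊢; exact this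
    have hc1 : (Chebyshev.T ℝ ((n:ℤ)+1)).coeff (n+1) = 2 ^ n := by
      have := ih1.2; push_cast at this ⊢; simpa using this
    constructor
    · refine (natDegree_sub_le _ _).trans (max_le ?_ (hdn.trans (by omega)))
      refine (natDegree_mul_le).trans ?_
      have : (2*X : ℝ[X]).natDegree ≤ 1 :=
        (natDegree_mul_le).trans (by simp)
      omega
    · rw [coeff_sub, coeff_eq_zero_of_natDegree_lt (by omega : (Chebyshev.T ℝ n).natDegree < n+2),
        mul_assoc]
      have h3 : ((2:ℝ[X]) * (X * Chebyshev.T ℝ ((n:ℤ)+1))).coeff (n+2)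
          = 2 * (X * Chebyshev.T ℝ ((n:ℤ)+1)).coeff (n+2) := by
        simp [coeff_ofNat_mul]
      rw [h3]
      have h4 : (X * Chebyshev.T ℝ ((n:ℤ)+1)).coeff (n+2) = (Chebyshev.T ℝ ((n:ℤ)+1)).coeff (n+1) := by
        simpa using coeff_X_mul (Chebyshev.T ℝ ((n:ℤ)+1)) (n+1)
      rw [h4, hc1]
      have hn : n+2-1 = n+1 := by omega
      rw [hn, sub_zero, pow_succ]; ring

lemma cheb_eval_le {y : ℝ} (n : ℕ) (hy : y ∈ Set.Icc (-1:ℝ) 1) :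
    |(Chebyshev.T ℝ n).eval y| ≤ 1 := by
  obtain ⟨hy1, hy2⟩ := hy
  have h : y = Real.cos (Real.arccos y) := (Real.cos_arccos hy1 hy2).symm
  rw [h, Polynomial.Chebyshev.T_real_cos]
  exact Real.abs_cos_le_one _

theorem stmt18 (k : ℕ) (hk : 1 ≤ k) (b : ℝ) (hb : 0 < b)
    (φ : ℝ → ℂ) (hφ : ContDiff ℝ k φ)
    (hsupp : Function.support φ ⊆ Set.Icc (-b) b)
    (hnorm : fourierTr φ 0 = 1) :
    Real.sqrt (2 * Real.pi) * 2 ^ (k - 1) * (Nat.factorial k : ℝ) / b ^ k ≤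
      ∫ t in Set.Icc (-b) b, ‖iteratedDeriv k φ t‖ := by
  have hbb : -b ≤ b := by linarith
  have hbne : b ≠ 0 := ne_of_gt hb
  -- support of iterated derivatives
  have hsupp' : ∀ j : ℕ, Function.support (iteratedDeriv j φ) ⊆ Set.Icc (-b) b := by
    intro j
    induction j with
    | zero => simpa [iteratedDeriv_zero] using hsupp
    | succ j ih =>
      rw [iteratedDeriv_succ]
      exact support_deriv_subset.trans (closure_minimal ih isClosed_Icc)
  -- vanishing outside the open interval
  have hvan : ∀ j : ℕ, j ≤ k → ∀ x : ℝ, x ∉ Set.Ioo (-b) b → iteratedDeriv j φ x = 0 := by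
    intro j hj x hx
    have hcont : Continuous (iteratedDeriv j φ) :=
      hφ.continuous_iteratedDeriv j (by exact_mod_cast hj)
    by_cases hxI : x ∈ Set.Icc (-b) b
    · have hx2 : x = -b ∨ x = b := by
        obtain ⟨h1, h2⟩ := hxI
        simp only [Set.mem_Ioo, not_and_or, not_lt] at hx
        rcases hx with h | h
        · left; linarith
        · right; linarith
      have hzr : Set.EqOn (iteratedDeriv j φ) 0 (Set.Ioi b) := by
        intro y hy
        exact Function.notMem_support.mp (fun hs => absurd ((hsupp' j) hs).2 (not_le.mpr hy))
      have hzl : Set.EqOn (iteratedDeriv j φ) 0 (Set.Iio (-b)) := by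
        intro y hy
        exact Function.notMem_support.mp (fun hs => absurd ((hsupp' j) hs).1 (not_le.mpr hy))
      rcases hx2 with rfl | rfl
      · have := (hzl.closure hcont continuous_const)
        rw [closure_Iio] at this
        exact this (Set.mem_Iic.mpr le_rfl)
      · have := (hzr.closure hcont continuous_const)
        rw [closure_Ioi] at this
        exact this (Set.mem_Ici.mpr le_rfl)
    · exact Function.notMem_support.mp (fun hs => hxI ((hsupp' j) hs))
  -- integration by parts, iterated
  have hibp : ∀ j : ℕ, j ≤ k → ∀ P : Polynomial ℝ,
      (∫ x in (-b)..b, iteratedDeriv j φ x * ((P.eval x : ℝ) : ℂ))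
        = (-1:ℂ)^j * ∫ x in (-b)..b, φ x * (((derivative^[j] P).eval x : ℝ) : ℂ) := by
    intro j
    induction j with
    | zero => intro _ P; simp
    | succ j ih =>
      intro hjk P
      have hu : ∀ x ∈ Set.uIcc (-b) b,
          HasDerivAt (fun x : ℝ => ((P.eval x : ℝ) : ℂ)) ((P.derivative.eval x : ℝ) : ℂ) x :=
        fun x _ => (P.hasDerivAt x).ofReal_comp
      have hdiff : Differentiable ℝ (iteratedDeriv j φ) :=
        hφ.differentiable_iteratedDeriv j (by exact_mod_cast Nat.lt_of_succ_le hjk)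
      have hv : ∀ x ∈ Set.uIcc (-b) b,
          HasDerivAt (iteratedDeriv j φ) (iteratedDeriv (j+1) φ x) x := by
        intro x _
        rw [iteratedDeriv_succ]
        exact (hdiff x).hasDerivAt
      have hu' : IntervalIntegrable (fun x : ℝ => ((P.derivative.eval x : ℝ) : ℂ)) volume (-b) b :=
        (Complex.continuous_ofReal.comp P.derivative.continuous).intervalIntegrable _ _
      have hv' : IntervalIntegrable (iteratedDeriv (j+1) φ) volume (-b) b :=
        (hφ.continuous_iteratedDeriv (j+1) (by exact_mod_cast hjk)).intervalIntegrable _ _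
      have key := intervalIntegral.integral_mul_deriv_eq_deriv_mul hu hv hu' hv'
      have hb1 : iteratedDeriv j φ b = 0 := hvan j (Nat.le_of_succ_le hjk) b (by simp)
      have hb2 : iteratedDeriv j φ (-b) = 0 := hvan j (Nat.le_of_succ_le hjk) (-b) (by simp)
      rw [hb1, hb2, mul_zero, mul_zero, sub_zero, zero_sub] at key
      have comm1 : (∫ x in (-b)..b, iteratedDeriv (j+1) φ x * ((P.eval x : ℝ) : ℂ))
          = ∫ x in (-b)..b, ((P.eval x : ℝ) : ℂ) * iteratedDeriv (j+1) φ x := by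
        congr 1; ext x; ring
      have comm2 : (∫ x in (-b)..b, ((P.derivative.eval x : ℝ) : ℂ) * iteratedDeriv j φ x)
          = ∫ x in (-b)..b, iteratedDeriv j φ x * ((P.derivative.eval x : ℝ) : ℂ) := by
        congr 1; ext x; ring
      rw [comm1, key, comm2, ih (Nat.le_of_succ_le hjk) P.derivative]
      rw [← Function.iterate_succ_apply]
      ring
  -- the integral of φ
  have h2π : (0:ℝ) < Real.sqrt (2 * Real.pi) := Real.sqrt_pos.mpr (by positivity)
  have hφint : (∫ x in (-b)..b, φ x) = ((Real.sqrt (2 * Real.pi) : ℝ) : ℂ) := by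
    have hIcc : (∫ x in Set.Icc (-b) b, φ x) = ∫ t : ℝ, φ t := by
      rw [← MeasureTheory.integral_indicator measurableSet_Icc, Set.indicator_eq_self.2 hsupp]
    have hval : (∫ t : ℝ, φ t) = ((Real.sqrt (2 * Real.pi) : ℝ) : ℂ) := by
      unfold fourierTr at hnorm
      simp only [Complex.ofReal_zero, mul_zero, neg_zero, Complex.exp_zero, mul_one] at hnorm
      have hne : ((Real.sqrt (2 * Real.pi) : ℝ) : ℂ) ≠ 0 := by
        exact_mod_cast ne_of_gt h2π
      rw [div_mul_eq_mul_div, one_mul, div_eq_one_iff_eq hne] at hnorm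
      exact hnorm
    rw [intervalIntegral.integral_of_le hbb, ← MeasureTheory.integral_Icc_eq_integral_Ioc,
      hIcc, hval]
  -- the Chebyshev-based polynomial
  set Q : Polynomial ℝ := (Chebyshev.T ℝ (k:ℤ)).comp (Polynomial.C b⁻¹ * Polynomial.X) with hQdef
  have hTdeg := (cheb_aux k).1
  have hTco := (cheb_aux k).2
  have hTk : derivative^[k] (Chebyshev.T ℝ (k:ℤ)) = Polynomial.C ((k.factorial : ℝ) * 2^(k-1)) := by
    have h0 : (derivative^[k] (Chebyshev.T ℝ (k:ℤ))).natDegree ≤ 0 :=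
      (natDegree_iterate_derivative _ _).trans (by omega)
    rw [Polynomial.eq_C_of_natDegree_le_zero h0, coeff_iterate_derivative]
    simp [Nat.descFactorial_self, hTco, nsmul_eq_mul]
  have hcomp : ∀ j : ℕ, derivative^[j] Q
      = Polynomial.C (b⁻¹^j) * (derivative^[j] (Chebyshev.T ℝ (k:ℤ))).comp (Polynomial.C b⁻¹ * Polynomial.X) := by
    intro j
    induction j with
    | zero => simp [hQdef]
    | succ j ih =>
      rw [Function.iterate_succ_apply', ih, Function.iterate_succ_apply', derivative_C_mul,
        Polynomial.derivative_comp]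
      simp only [derivative_C_mul, Polynomial.derivative_X, mul_one]
      rw [pow_succ]
      ring_nf
      rw [Polynomial.C_mul]
      ring
  have hQk : derivative^[k] Q = Polynomial.C (b⁻¹^k * ((k.factorial : ℝ) * 2^(k-1))) := by
    rw [hcomp k, hTk, Polynomial.C_comp, ← Polynomial.C_mul]
  -- eval bound for Q
  have hQbound : ∀ x ∈ Set.Icc (-b) b, |Q.eval x| ≤ 1 := by
    intro x hx
    obtain ⟨h1, h2⟩ := hx
    have heval : Q.eval x = (Chebyshev.T ℝ (k:ℤ)).eval (b⁻¹ * x) := by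
      simp [hQdef, Polynomial.eval_comp]
    rw [heval]
    apply cheb_eval_le
    have hxb : |x| ≤ b := abs_le.mpr ⟨h1, h2⟩
    have habs : |b⁻¹ * x| ≤ 1 := by
      rw [abs_mul, abs_inv, abs_of_pos hb]
      calc b⁻¹ * |x| ≤ b⁻¹ * b := mul_le_mul_of_nonneg_left hxb (by positivity)
        _ = 1 := inv_mul_cancel₀ hbne
    exact Set.mem_Icc.mpr (abs_le.mp habs)
  -- put it together
  set c : ℝ := b⁻¹^k * ((k.factorial : ℝ) * 2^(k-1)) with hc
  have hcpos : 0 < c := by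
    have : (0:ℝ) < (k.factorial : ℝ) := by exact_mod_cast k.factorial_pos
    positivity
  have hkey : (∫ x in (-b)..b, iteratedDeriv k φ x * ((Q.eval x : ℝ) : ℂ))
      = (-1:ℂ)^k * (((Real.sqrt (2 * Real.pi) : ℝ) : ℂ) * (c : ℂ)) := by
    rw [hibp k le_rfl Q, hQk]
    simp only [Polynomial.eval_C]
    rw [intervalIntegral.integral_mul_const, hφint]
  have hnormkey : Real.sqrt (2 * Real.pi) * c
      = ‖∫ x in (-b)..b, iteratedDeriv k φ x * ((Q.eval x : ℝ) : ℂ)‖ := by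
    rw [hkey]
    rw [norm_mul, norm_pow, norm_neg, norm_one, one_pow, one_mul, norm_mul]
    rw [Complex.norm_real, Complex.norm_real, Real.norm_of_nonneg h2π.le,
      Real.norm_of_nonneg hcpos.le]
  have hcont1 : Continuous (iteratedDeriv k φ) :=
    hφ.continuous_iteratedDeriv k (by exact_mod_cast le_rfl)
  have hle1 : ‖∫ x in (-b)..b, iteratedDeriv k φ x * ((Q.eval x : ℝ) : ℂ)‖
      ≤ ∫ x in (-b)..b, ‖iteratedDeriv k φ x * ((Q.eval x : ℝ) : ℂ)‖ :=
    intervalIntegral.norm_integral_le_integral_norm hbb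
  have hle2 : (∫ x in (-b)..b, ‖iteratedDeriv k φ x * ((Q.eval x : ℝ) : ℂ)‖)
      ≤ ∫ x in (-b)..b, ‖iteratedDeriv k φ x‖ := by
    apply intervalIntegral.integral_mono_on hbb
    · exact ((hcont1.mul (Complex.continuous_ofReal.comp Q.continuous)).norm).intervalIntegrable _ _
    · exact (hcont1.norm).intervalIntegrable _ _
    · intro x hx
      rw [norm_mul, Complex.norm_real]
      calc ‖iteratedDeriv k φ x‖ * ‖Q.eval x‖ ≤ ‖iteratedDeriv k φ x‖ * 1 := by
            apply mul_le_mul_of_nonneg_left _ (norm_nonneg _)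
            simpa [Real.norm_eq_abs] using hQbound x hx
        _ = ‖iteratedDeriv k φ x‖ := mul_one _
  have hfinal : Real.sqrt (2 * Real.pi) * c ≤ ∫ x in (-b)..b, ‖iteratedDeriv k φ x‖ := by
    rw [hnormkey]; exact hle1.trans hle2
  have hgoalint : (∫ t in Set.Icc (-b) b, ‖iteratedDeriv k φ t‖)
      = ∫ x in (-b)..b, ‖iteratedDeriv k φ x‖ := by
    rw [intervalIntegral.integral_of_le hbb, MeasureTheory.integral_Icc_eq_integral_Ioc]
  rw [hgoalint]
  refine le_trans (le_of_eq ?_) hfinal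
  rw [hc]
  field_simp
  ring
  rw [← mul_pow, mul_inv_cancel₀ hbne, one_pow]
end

section
/- Let 0 < δ < π, n ≥ 4/(π−δ), and set k = ⌊n(π−δ)/2⌋. Then (1/π)(1/n + 2/k) · 2^{k−1} k! / ((π−δ)^k n^k) ≤ (11e/(10√π)) · (√(π−δ)/(2√n) + 2√2/√(n(π−δ))) · exp(−(π−δ)n/2). -/
set_option maxHeartbeats 1000000

open Real

lemma factorial_le_stirling (k : ℕ) (hk : 1 ≤ k) :
    (Nat.factorial k : ℝ) ≤ Real.exp 1 * Real.sqrt k * ((k : ℝ) / Real.exp 1) ^ k := by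
  obtain ⟨m, rfl⟩ := Nat.exists_eq_add_of_le' hk
  have hpos : 0 < Stirling.stirlingSeq (m + 1) := Stirling.stirlingSeq'_pos m
  have h1 : Stirling.stirlingSeq (m + 1) ≤ Stirling.stirlingSeq 1 := by
    have h := Stirling.log_stirlingSeq'_antitone (Nat.zero_le m)
    simp only [Function.comp, Nat.succ_eq_add_one, zero_add] at h
    exact (Real.log_le_log_iff hpos (Stirling.stirlingSeq'_pos 0)).mp h
  rw [Stirling.stirlingSeq_one, Stirling.stirlingSeq] at h1
  have hden : 0 < Real.sqrt (2 * ((m+1:ℕ):ℝ)) * (((m+1:ℕ):ℝ) / Real.exp 1) ^ (m+1) := by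
    positivity
  have h2 : (0:ℝ) < Real.sqrt 2 := by positivity
  rw [div_le_div_iff₀ hden h2] at h1
  rw [Real.sqrt_mul (by norm_num : (0:ℝ) ≤ 2)] at h1
  refine (mul_le_mul_iff_of_pos_right h2).mp ?_
  calc (Nat.factorial (m+1) : ℝ) * Real.sqrt 2
      ≤ Real.exp 1 * (Real.sqrt 2 * Real.sqrt ((m+1:ℕ):ℝ) * (((m+1:ℕ):ℝ) / Real.exp 1) ^ (m+1)) := h1
    _ = Real.exp 1 * Real.sqrt ((m+1:ℕ):ℝ) * (((m+1:ℕ):ℝ) / Real.exp 1) ^ (m+1) * Real.sqrt 2 := by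
        ring

theorem stmt19 (δ : ℝ) (hδ0 : 0 < δ) (hδ : δ < Real.pi) (n : ℕ)
    (hn : 4 / (Real.pi - δ) ≤ (n : ℝ)) (k : ℕ)
    (hk : k = ⌊(n : ℝ) * (Real.pi - δ) / 2⌋₊) :
    (1 / Real.pi) * (1 / (n : ℝ) + 2 / (k : ℝ)) * 2 ^ (k - 1) * (Nat.factorial k : ℝ) /
        ((Real.pi - δ) ^ k * (n : ℝ) ^ k) ≤
      (11 * Real.exp 1 / (10 * Real.sqrt Real.pi)) *
        (Real.sqrt (Real.pi - δ) / (2 * Real.sqrt n) +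
          2 * Real.sqrt 2 / Real.sqrt ((n : ℝ) * (Real.pi - δ))) *
        Real.exp (-(Real.pi - δ) * n / 2) := by
  have hπ : 0 < Real.pi := Real.pi_pos
  have hE : 0 < Real.exp 1 := Real.exp_pos 1
  set c : ℝ := Real.pi - δ with hcdef
  have hc : 0 < c := sub_pos.mpr hδ
  clear_value c
  have hcn : 4 ≤ (n:ℝ) * c := by
    rw [div_le_iff₀ hc] at hn; linarith
  have hN : 0 < (n:ℝ) := by nlinarith
  have hk2 : 2 ≤ k := by
    rw [hk]; apply Nat.le_floor; push_cast; linarith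
  have hK1 : (k:ℝ) ≤ (n:ℝ) * c / 2 := by
    rw [hk]; exact Nat.floor_le (by positivity)
  have hK2 : (n:ℝ) * c / 2 < (k:ℝ) + 1 := by
    rw [hk]; push_cast; exact Nat.lt_floor_add_one _
  have hKpos : (0:ℝ) < (k:ℝ) := by
    have : 0 < k := by omega
    exact_mod_cast this
  have hK4 : (n:ℝ) * c / 4 ≤ (k:ℝ) := by linarith
  -- constant lemma
  have e2 : Real.sqrt 2 * Real.sqrt 2 = 2 := Real.mul_self_sqrt (by norm_num)
  have eπ : Real.sqrt Real.pi * Real.sqrt Real.pi = Real.pi := Real.mul_self_sqrt hπ.le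
  have hs2 : (0:ℝ) < Real.sqrt 2 := by positivity
  have hsπ : (0:ℝ) < Real.sqrt Real.pi := Real.sqrt_pos.mpr hπ
  have hconst : 10 * Real.exp 1 * Real.sqrt Real.pi ≤ 11 * Real.sqrt 2 * Real.pi := by
    have hsq : (10 * Real.exp 1 * Real.sqrt Real.pi) ^ 2 ≤ (11 * Real.sqrt 2 * Real.pi) ^ 2 := by
      have h1 : (10 * Real.exp 1 * Real.sqrt Real.pi) ^ 2 = 100 * Real.exp 1 ^ 2 * Real.pi := by
        rw [mul_pow, mul_pow, Real.sq_sqrt hπ.le]; ring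
      have h2 : (11 * Real.sqrt 2 * Real.pi) ^ 2 = 242 * Real.pi ^ 2 := by
        rw [mul_pow, mul_pow, Real.sq_sqrt (by norm_num : (0:ℝ) ≤ 2)]; ring
      rw [h1, h2]
      have he' : Real.exp 1 ≤ 2.7182818286 := Real.exp_one_lt_d9.le
      have h3 : Real.exp 1 ^ 2 ≤ 7.39 := by nlinarith [he', hE]
      have h4 : (3.14:ℝ) ≤ Real.pi := by linarith [Real.pi_gt_d6]
      calc 100 * Real.exp 1 ^ 2 * Real.pi ≤ 739 * Real.pi := by nlinarith [h3, hπ]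
        _ ≤ 242 * Real.pi ^ 2 := by
            nlinarith [mul_le_mul_of_nonneg_left h4 (by positivity : (0:ℝ) ≤ 242 * Real.pi)]
    have := Real.sqrt_le_sqrt hsq
    rwa [Real.sqrt_sq (by positivity), Real.sqrt_sq (by positivity)] at this
  have hconst2 : 10 * Real.exp 1 ^ 2 * Real.sqrt Real.pi ≤ 11 * Real.exp 1 * Real.sqrt 2 * Real.pi := by
    nlinarith [hconst, hE]
  -- core inequality
  have hfac := factorial_le_stirling k (by omega)
  have hcN : 0 < c * (n:ℝ) := by positivity
  have hB1 : 0 ≤ 2 * (k:ℝ) / (Real.exp 1 * (c * (n:ℝ))) := by positivity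
  have hB2 : 2 * (k:ℝ) / (Real.exp 1 * (c * (n:ℝ))) ≤ 1 / Real.exp 1 := by
    rw [div_le_div_iff₀ (by positivity) hE]
    nlinarith [hK1]
  have hBk : (2 * (k:ℝ) / (Real.exp 1 * (c * (n:ℝ)))) ^ k ≤ (1 / Real.exp 1) ^ k :=
    pow_le_pow_left₀ hB1 hB2 k
  have hBpow : (2 * (k:ℝ) / (Real.exp 1 * (c * (n:ℝ)))) ^ k
      = 2 ^ k * (k:ℝ) ^ k / (Real.exp 1 ^ k * (c ^ k * (n:ℝ) ^ k)) := by
    rw [div_pow, mul_pow, mul_pow, mul_pow]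
  have h1e : (1 / Real.exp 1) ^ k = Real.exp (-(k:ℝ)) := by
    rw [one_div, ← Real.exp_neg, ← Real.exp_nat_mul]
    ring_nf
  have hexp : Real.exp (-(k:ℝ)) ≤ Real.exp 1 * Real.exp (-c * (n:ℝ) / 2) := by
    rw [← Real.exp_add]
    apply Real.exp_le_exp.mpr
    linarith
  have h2k : (2:ℝ) ^ k = 2 * 2 ^ (k - 1) := by
    conv_lhs => rw [show k = k - 1 + 1 by omega]
    rw [pow_succ]; ring
  set sK : ℝ := Real.sqrt k with hsKdef
  have hsKpos : 0 < sK := Real.sqrt_pos.mpr hKpos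
  have hKsq : (k:ℝ) = sK * sK := (Real.mul_self_sqrt hKpos.le).symm
  clear_value sK
  have core : (2:ℝ) ^ (k-1) * (Nat.factorial k : ℝ) / (c ^ k * (n:ℝ) ^ k)
      ≤ Real.exp 1 ^ 2 / 2 * sK * Real.exp (-c * (n:ℝ) / 2) := by
    have hek : (Real.exp 1 : ℝ) ^ k ≠ 0 := pow_ne_zero _ hE.ne'
    have hck : (c : ℝ) ^ k ≠ 0 := pow_ne_zero _ hc.ne'
    have hnk : ((n:ℝ)) ^ k ≠ 0 := pow_ne_zero _ hN.ne'
    have key : (2:ℝ) ^ (k-1) * (Real.exp 1 * sK * ((k:ℝ) / Real.exp 1) ^ k) / (c ^ k * (n:ℝ) ^ k)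
        = (Real.exp 1 * sK / 2) * (2 * (k:ℝ) / (Real.exp 1 * (c * (n:ℝ)))) ^ k := by
      have h2k' : (2:ℝ) ^ (k-1) = 2 ^ k / 2 := by rw [h2k]; ring
      rw [hBpow, div_pow, h2k']
      ring
    calc (2:ℝ) ^ (k-1) * (Nat.factorial k : ℝ) / (c ^ k * (n:ℝ) ^ k)
        ≤ (2:ℝ) ^ (k-1) * (Real.exp 1 * sK * ((k:ℝ) / Real.exp 1) ^ k) / (c ^ k * (n:ℝ) ^ k) := by
          have hd : (0:ℝ) < c ^ k * (n:ℝ) ^ k := by positivity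
          exact (div_le_div_iff_of_pos_right hd).mpr
            (mul_le_mul_of_nonneg_left hfac (by positivity))
      _ = (Real.exp 1 * sK / 2) * (2 * (k:ℝ) / (Real.exp 1 * (c * (n:ℝ)))) ^ k := key
      _ ≤ (Real.exp 1 * sK / 2) * (Real.exp 1 * Real.exp (-c * (n:ℝ) / 2)) := by
          apply mul_le_mul_of_nonneg_left _ (by positivity)
          calc (2 * (k:ℝ) / (Real.exp 1 * (c * (n:ℝ)))) ^ k ≤ (1 / Real.exp 1) ^ k := hBk
            _ = Real.exp (-(k:ℝ)) := h1e
            _ ≤ Real.exp 1 * Real.exp (-c * (n:ℝ) / 2) := hexp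
      _ = Real.exp 1 ^ 2 / 2 * sK * Real.exp (-c * (n:ℝ) / 2) := by ring
  -- sqrt bounds
  set a : ℝ := Real.sqrt n with hadef
  set b : ℝ := Real.sqrt c with hbdef
  have hapos : 0 < a := Real.sqrt_pos.mpr hN
  have hbpos : 0 < b := Real.sqrt_pos.mpr hc
  have hNsq : (n:ℝ) = a * a := (Real.mul_self_sqrt hN.le).symm
  have hab : Real.sqrt ((n:ℝ) * c) = a * b := Real.sqrt_mul hN.le c
  have hsK1 : sK ≤ a * b / Real.sqrt 2 := by
    rw [le_div_iff₀ hs2]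
    calc sK * Real.sqrt 2 ≤ Real.sqrt ((n:ℝ) * c / 2) * Real.sqrt 2 := by
          gcongr
          exact hsKdef ▸ Real.sqrt_le_sqrt hK1
      _ = Real.sqrt ((n:ℝ) * c / 2 * 2) := (Real.sqrt_mul (by positivity) 2).symm
      _ = a * b := by rw [show (n:ℝ) * c / 2 * 2 = (n:ℝ) * c by ring, hab]
  have hsK2 : 1 / sK ≤ 2 / (a * b) := by
    rw [div_le_div_iff₀ hsKpos (by positivity)]
    have : a * b ≤ 2 * sK := by
      rw [← hab]
      calc Real.sqrt ((n:ℝ) * c) ≤ Real.sqrt (4 * (k:ℝ)) := by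
            apply Real.sqrt_le_sqrt; linarith
        _ = 2 * sK := by
            rw [show (4:ℝ) * (k:ℝ) = 2^2 * (k:ℝ) by norm_num, Real.sqrt_mul (by positivity),
              Real.sqrt_sq (by norm_num : (0:ℝ) ≤ 2), ← hsKdef]
    linarith
  -- coefficient comparisons
  set C : ℝ := 11 * Real.exp 1 / (10 * Real.sqrt Real.pi) with hCdef
  clear_value C
  have t1 : Real.exp 1 ^ 2 / (2 * Real.pi) * (b / (Real.sqrt 2 * a)) ≤ C * (b / (2 * a)) := by
    have h : Real.exp 1 ^ 2 / (2 * Real.pi) * (1 / Real.sqrt 2) ≤ C * (1 / 2) := by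
      rw [hCdef, div_mul_div_comm, div_mul_div_comm,
        div_le_div_iff₀ (by positivity) (by positivity)]
      nlinarith [hconst2]
    calc Real.exp 1 ^ 2 / (2 * Real.pi) * (b / (Real.sqrt 2 * a))
        = (Real.exp 1 ^ 2 / (2 * Real.pi) * (1 / Real.sqrt 2)) * (b / a) := by
          field_simp
      _ ≤ (C * (1/2)) * (b / a) := by
          apply mul_le_mul_of_nonneg_right h (by positivity)
      _ = C * (b / (2 * a)) := by field_simp
  have t2 : Real.exp 1 ^ 2 / (2 * Real.pi) * (4 / (a * b)) ≤ C * (2 * Real.sqrt 2 / (a * b)) := by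
    have h : Real.exp 1 ^ 2 / (2 * Real.pi) * 4 ≤ C * (2 * Real.sqrt 2) := by
      rw [hCdef, div_mul_eq_mul_div, div_mul_eq_mul_div,
        div_le_div_iff₀ (by positivity) (by positivity)]
      nlinarith [hconst2]
    calc Real.exp 1 ^ 2 / (2 * Real.pi) * (4 / (a * b))
        = (Real.exp 1 ^ 2 / (2 * Real.pi) * 4) * (1 / (a * b)) := by ring
      _ ≤ (C * (2 * Real.sqrt 2)) * (1 / (a * b)) := by
          apply mul_le_mul_of_nonneg_right h (by positivity)
      _ = C * (2 * Real.sqrt 2 / (a * b)) := by ring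
  -- assemble
  rw [hab]
  calc (1 / Real.pi) * (1 / (n:ℝ) + 2 / (k:ℝ)) * 2 ^ (k - 1) * (Nat.factorial k : ℝ) /
        (c ^ k * (n:ℝ) ^ k)
      = (1 / Real.pi * (1 / (n:ℝ) + 2 / (k:ℝ))) *
        ((2:ℝ) ^ (k-1) * (Nat.factorial k : ℝ) / (c ^ k * (n:ℝ) ^ k)) := by ring
    _ ≤ (1 / Real.pi * (1 / (n:ℝ) + 2 / (k:ℝ))) *
        (Real.exp 1 ^ 2 / 2 * sK * Real.exp (-c * (n:ℝ) / 2)) := by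
        apply mul_le_mul_of_nonneg_left core (by positivity)
    _ = Real.exp 1 ^ 2 / (2 * Real.pi) * (sK / (n:ℝ) + 2 * sK / (k:ℝ)) *
        Real.exp (-c * (n:ℝ) / 2) := by
        field_simp
    _ = Real.exp 1 ^ 2 / (2 * Real.pi) * (sK / (n:ℝ) + 2 / sK) *
        Real.exp (-c * (n:ℝ) / 2) := by
        rw [hKsq]
        field_simp
    _ ≤ Real.exp 1 ^ 2 / (2 * Real.pi) * (b / (Real.sqrt 2 * a) + 4 / (a * b)) *
        Real.exp (-c * (n:ℝ) / 2) := by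
        apply mul_le_mul_of_nonneg_right _ (Real.exp_nonneg _)
        apply mul_le_mul_of_nonneg_left _ (by positivity)
        apply add_le_add
        · calc sK / (n:ℝ) ≤ (a * b / Real.sqrt 2) / (n:ℝ) := by gcongr
            _ = b / (Real.sqrt 2 * a) := by rw [hNsq]; field_simp
        · calc 2 / sK = 2 * (1 / sK) := by ring
            _ ≤ 2 * (2 / (a * b)) := by linarith
            _ = 4 / (a * b) := by ring
    _ ≤ C * (b / (2 * a) + 2 * Real.sqrt 2 / (a * b)) * Real.exp (-c * (n:ℝ) / 2) := by
        apply mul_le_mul_of_nonneg_right _ (Real.exp_nonneg _)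
        rw [mul_add, mul_add]
        exact add_le_add t1 t2
end
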